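/- In the quotient ring $A = \mathbb{Z}[z_{12},z_{20},z_{30}]/(2z_{30},\, 3z_{20}^2,\, 5z_{12}^4,\, z_{12}^5 + z_{20}^3 + z_{30}^2)$, the class of $z_{12}^4$ has additive order exactly $5$ and the class of $z_{20}^2$ has additive order exactly $3$. -/

import Mathlib

open MvPolynomial

noncomputable def I11 : Ideal (MvPolynomial (Fin 3) ℤ) :=
  Ideal.span {2 * X (2 : Fin 3), 3 * (X (1 : Fin 3)) ^ 2, 5 * (X (0 : Fin 3)) ^ 4,
    (X (0 : Fin 3)) ^ 5 + (X (1 : Fin 3)) ^ 3 + (X (2 : Fin 3)) ^ 2}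

noncomputable def J5 : Ideal (Polynomial (ZMod 5)) := Ideal.span {Polynomial.X ^ 5}
noncomputable def J3 : Ideal (Polynomial (ZMod 3)) := Ideal.span {Polynomial.X ^ 3}

noncomputable def f5 : MvPolynomial (Fin 3) ℤ →+* Polynomial (ZMod 5) ⧸ J5 :=
  (Ideal.Quotient.mk J5).comp
    (eval₂Hom (Int.castRingHom _) ![Polynomial.X, 0, 0])

noncomputable def f3 : MvPolynomial (Fin 3) ℤ →+* Polynomial (ZMod 3) ⧸ J3 :=
  (Ideal.Quotient.mk J3).comp
    (eval₂Hom (Int.castRingHom _) ![0, Polynomial.X, 0])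

lemma zmod5_5 : (5 : Polynomial (ZMod 5)) = 0 := by
  rw [show (5 : Polynomial (ZMod 5)) = ((5:ℕ) : Polynomial (ZMod 5)) by norm_num,
    ← Polynomial.C_eq_natCast, show ((5:ℕ) : ZMod 5) = 0 by decide, map_zero]

lemma zmod3_3 : (3 : Polynomial (ZMod 3)) = 0 := by
  rw [show (3 : Polynomial (ZMod 3)) = ((3:ℕ) : Polynomial (ZMod 3)) by norm_num,
    ← Polynomial.C_eq_natCast, show ((3:ℕ) : ZMod 3) = 0 by decide, map_zero]

lemma q5_5 : (5 : Polynomial (ZMod 5) ⧸ J5) = 0 := by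
  rw [show (5 : Polynomial (ZMod 5) ⧸ J5) = Ideal.Quotient.mk J5 5 from (map_ofNat _ 5).symm,
    zmod5_5, map_zero]

lemma q3_3 : (3 : Polynomial (ZMod 3) ⧸ J3) = 0 := by
  rw [show (3 : Polynomial (ZMod 3) ⧸ J3) = Ideal.Quotient.mk J3 3 from (map_ofNat _ 3).symm,
    zmod3_3, map_zero]

lemma f5_ker : I11 ≤ RingHom.ker f5 := by
  rw [I11, Ideal.span_le]
  intro p hp
  simp only [Set.mem_insert_iff, Set.mem_singleton_iff] at hp
  rcases hp with rfl | rfl | rfl | rfl <;>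
    simp only [SetLike.mem_coe, RingHom.mem_ker, f5, RingHom.coe_comp, Function.comp_apply,
      map_mul, map_add, map_pow, map_ofNat, eval₂Hom_X', Matrix.cons_val_zero,
      Matrix.cons_val_one, Matrix.head_cons, Matrix.cons_val_two, Matrix.tail_cons, map_zero]
  · rw [mul_zero]
  · rw [zero_pow two_ne_zero, mul_zero]
  · rw [q5_5, zero_mul]
  · rw [zero_pow three_ne_zero, zero_pow two_ne_zero, add_zero, add_zero, ← map_pow,
      Ideal.Quotient.eq_zero_iff_mem, J5, Ideal.mem_span_singleton]

lemma f3_ker : I11 ≤ RingHom.ker f3 := by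
  rw [I11, Ideal.span_le]
  intro p hp
  simp only [Set.mem_insert_iff, Set.mem_singleton_iff] at hp
  rcases hp with rfl | rfl | rfl | rfl <;>
    simp only [SetLike.mem_coe, RingHom.mem_ker, f3, RingHom.coe_comp, Function.comp_apply,
      map_mul, map_add, map_pow, map_ofNat, eval₂Hom_X', Matrix.cons_val_zero,
      Matrix.cons_val_one, Matrix.head_cons, Matrix.cons_val_two, Matrix.tail_cons, map_zero]
  · rw [mul_zero]
  · rw [q3_3, zero_mul]
  · rw [zero_pow four_ne_zero, mul_zero]
  · rw [zero_pow (by norm_num : (5:ℕ) ≠ 0), zero_pow two_ne_zero, zero_add, add_zero, ← map_pow,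
      Ideal.Quotient.eq_zero_iff_mem, J3, Ideal.mem_span_singleton]

lemma nmem5 : (X (0 : Fin 3) : MvPolynomial (Fin 3) ℤ) ^ 4 ∉ I11 := by
  haveI : Fact (Nat.Prime 5) := ⟨by norm_num⟩
  intro h
  have h0 := f5_ker h
  rw [RingHom.mem_ker, f5, RingHom.coe_comp, Function.comp_apply, map_pow, eval₂Hom_X',
    Matrix.cons_val_zero, Ideal.Quotient.eq_zero_iff_mem, J5,
    Ideal.mem_span_singleton] at h0
  have hd := Polynomial.natDegree_le_of_dvd h0 (by
    exact pow_ne_zero 4 Polynomial.X_ne_zero)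
  simp [Polynomial.natDegree_X_pow] at hd

lemma nmem3 : (X (1 : Fin 3) : MvPolynomial (Fin 3) ℤ) ^ 2 ∉ I11 := by
  haveI : Fact (Nat.Prime 3) := ⟨by norm_num⟩
  intro h
  have h0 := f3_ker h
  rw [RingHom.mem_ker, f3, RingHom.coe_comp, Function.comp_apply, map_pow, eval₂Hom_X',
    Matrix.cons_val_one, Matrix.cons_val_zero, Ideal.Quotient.eq_zero_iff_mem, J3,
    Ideal.mem_span_singleton] at h0
  have hd := Polynomial.natDegree_le_of_dvd h0 (by
    exact pow_ne_zero 2 Polynomial.X_ne_zero)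
  simp [Polynomial.natDegree_X_pow] at hd

/-- In the quotient, the class of `z₁₂⁴` has additive order exactly `5` and the
class of `z₂₀²` has additive order exactly `3`. -/
theorem stmt11 :
    addOrderOf (Ideal.Quotient.mk I11 ((X (0 : Fin 3)) ^ 4)) = 5 ∧
    addOrderOf (Ideal.Quotient.mk I11 ((X (1 : Fin 3)) ^ 2)) = 3 := by
  haveI : Fact (Nat.Prime 5) := ⟨by norm_num⟩
  haveI : Fact (Nat.Prime 3) := ⟨by norm_num⟩
  constructor
  · apply addOrderOf_eq_prime
    · rw [← map_nsmul, Ideal.Quotient.eq_zero_iff_mem]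
      have : (5 : ℕ) • (X (0 : Fin 3) : MvPolynomial (Fin 3) ℤ) ^ 4 = 5 * X 0 ^ 4 := by
        push_cast [nsmul_eq_mul]; ring
      rw [this]
      exact Ideal.subset_span (by simp)
    · rw [Ne, Ideal.Quotient.eq_zero_iff_mem]
      exact nmem5
  · apply addOrderOf_eq_prime
    · rw [← map_nsmul, Ideal.Quotient.eq_zero_iff_mem]
      have : (3 : ℕ) • (X (1 : Fin 3) : MvPolynomial (Fin 3) ℤ) ^ 2 = 3 * X 1 ^ 2 := by
        push_cast [nsmul_eq_mul]; ring
      rw [this]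
      exact Ideal.subset_span (by simp)
    · rw [Ne, Ideal.Quotient.eq_zero_iff_mem]
      exact nmem3
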